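/- There exist three paths P_1, P_2, P_3 on a common set of 6 vertices such that the union P_1 ∪ P_2 ∪ P_3 is the complete graph K_6. Consequently, the bound of 6 colors for unions of three trees is tight. -/

import Mathlib

open SimpleGraph

/-- A coloring is proper for a graph if adjacent vertices get different colors. -/
def ProperColoring {V α : Type*} (H : SimpleGraph V) (c : V → α) : Prop :=
  ∀ u v, H.Adj u v → c u ≠ c v

/-- Two colorings are compatible for two consecutive snapshots if, for every edge of
either snapshot, the first coloring of one endpoint differs from the second coloring
of the other endpoint. -/
def Compatible {V α : Type*} (G G' : SimpleGraph V) (c c' : V → α) : Prop :=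
  ∀ u v, (G ⊔ G').Adj u v → c u ≠ c' v

/-- The union of the snapshots at times `i-1`, `i`, `i+1` (those that exist, with
snapshots indexed by `1,…,T`). -/
def Smash {V : Type*} (G : ℕ → SimpleGraph V) (T i : ℕ) : SimpleGraph V :=
  (if 2 ≤ i then G (i - 1) else ⊥) ⊔ G i ⊔ (if i < T then G (i + 1) else ⊥)

/-- A temporal coloring of a temporal graph with snapshots `G 1, …, G T`. -/
def TemporalColoring {V α : Type*} (T : ℕ) (G : ℕ → SimpleGraph V) (c : ℕ → V → α) : Prop :=
  (∀ i, 1 ≤ i → i ≤ T → ProperColoring (Smash G T i) (c i)) ∧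
  (∀ i, 1 ≤ i → i < T → Compatible (G i) (G (i + 1)) (c i) (c (i + 1)))

/-- The temporal chromatic number: the least `k` admitting a temporal `k`-coloring. -/
noncomputable def temporalChromaticNumber {V : Type*} (T : ℕ) (G : ℕ → SimpleGraph V) : ℕ :=
  sInf {k | ∃ c : ℕ → V → Fin k, TemporalColoring T G c}

/-- A graph is `d`-degenerate if every nonempty (finite) subgraph has a vertex of
degree at most `d`. -/
def Degenerate {V : Type*} (H : SimpleGraph V) (d : ℕ) : Prop :=
  ∀ s : Finset V, s.Nonempty → ∃ v ∈ s, ({u | u ∈ s ∧ H.Adj v u} : Set V).ncard ≤ d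

/-- A graph is `Δ`-bounded if every vertex has degree at most `Δ`. -/
def DegLE {V : Type*} (H : SimpleGraph V) (Δ : ℕ) : Prop :=
  ∀ v, (H.neighborSet v).ncard ≤ Δ

def e2 : Fin 6 ≃ Fin 6 := ⟨![1,3,5,0,2,4], ![3,0,4,1,5,2], by decide, by decide⟩
def e3 : Fin 6 ≃ Fin 6 := ⟨![3,0,4,1,5,2], ![1,3,5,0,2,4], by decide, by decide⟩

/-- There exist three Hamiltonian paths on 6 vertices whose union is `K_6`. -/
theorem statement6 :
    ∃ P1 P2 P3 : SimpleGraph (Fin 6),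
      Nonempty (P1 ≃g SimpleGraph.pathGraph 6) ∧
      Nonempty (P2 ≃g SimpleGraph.pathGraph 6) ∧
      Nonempty (P3 ≃g SimpleGraph.pathGraph 6) ∧
      P1 ⊔ P2 ⊔ P3 = ⊤ := by
  refine ⟨pathGraph 6, (pathGraph 6).map e2.toEmbedding, (pathGraph 6).map e3.toEmbedding,
    ⟨Iso.refl⟩, ⟨(Iso.map e2 (pathGraph 6)).symm⟩, ⟨(Iso.map e3 (pathGraph 6)).symm⟩, ?_⟩
  ext u v
  simp only [sup_adj, map_adj', top_adj, pathGraph_adj, Equiv.coe_toEmbedding, e2, e3]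
  revert u v
  decide
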